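/- Let β be a quadratic Pisot unit, root of x² - ax - 1, and α = -β^{-1}. If a number z has an eventually periodic weakly admissible α-adic expansion, then every weakly admissible α-adic expansion of z is eventually periodic. -/

import Mathlib

/-- A weakly admissible α-adic expansion of y over the alphabet {0,…,a}:
digits in {0,…,a}, finitely many nonzero digits of negative index, every factor
lexicographically ≤ (a0)^ω (equivalently a digit a is always followed on the
right by 0), with α-value y. -/
def IsAlphaAdicExpansion (a : ℕ) (α : ℝ) (f : ℤ → ℤ) (y : ℝ) : Prop :=
  (∀ i, 0 ≤ f i ∧ f i ≤ a) ∧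
  (∃ k : ℤ, ∀ i, i < k → f i = 0) ∧
  (∀ i, f (i + 1) = a → f i = 0) ∧
  HasSum (fun i : ℤ => (f i : ℝ) * α ^ i) y

/-- A left-infinite digit sequence is eventually periodic (to the left). -/
def EventuallyPeriodic (f : ℤ → ℤ) : Prop :=
  ∃ (N : ℤ) (p : ℕ), 0 < p ∧ ∀ i, N ≤ i → f (i + p) = f i

section AuxSection

variable {a : ℕ} {β α : ℝ}

lemma beta_gt_one (ha : 0 < a) (hroot : β ^ 2 = a * β + 1) (hpos : 0 < β) : 1 < β := by
  have ha' : (1:ℝ) ≤ a := by exact_mod_cast ha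
  by_contra h
  push_neg at h
  nlinarith [mul_nonneg (sub_nonneg.2 ha') hpos.le]

lemma abs_alpha (hpos : 0 < β) (hα : α = -β⁻¹) : |α| = β⁻¹ := by
  rw [hα, abs_neg, abs_of_pos (by positivity)]

lemma abs_alpha_lt_one (hroot : β ^ 2 = a * β + 1) (hpos : 0 < β) (ha : 0 < a)
    (hα : α = -β⁻¹) : |α| < 1 := by
  rw [abs_alpha hpos hα]
  have := beta_gt_one ha hroot hpos
  rw [inv_lt_one_iff₀]; right; exact this

lemma beta_sub_inv (hroot : β ^ 2 = a * β + 1) (hpos : 0 < β) :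
    β - β⁻¹ = a := by
  field_simp
  nlinarith

lemma alpha_mul_beta (hpos : 0 < β) (hα : α = -β⁻¹) : α * β = -1 := by
  rw [hα]; field_simp

lemma alpha_ne_zero (hpos : 0 < β) (hα : α = -β⁻¹) : α ≠ 0 := by
  rw [hα]
  have : (0:ℝ) < β⁻¹ := by positivity
  intro hc
  rw [neg_eq_zero] at hc
  exact absurd hc (ne_of_gt this)

/-- normalized tail sum of an expansion from index `n`. -/
noncomputable def tailS (α : ℝ) (h : ℤ → ℤ) (n : ℤ) : ℝ :=
  ∑' i : ℕ, (h (n + i) : ℝ) * α ^ i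

lemma summable_tail (hroot : β ^ 2 = a * β + 1) (hpos : 0 < β) (ha : 0 < a)
    (hα : α = -β⁻¹) (h : ℤ → ℤ) (hd : ∀ i, 0 ≤ h i ∧ h i ≤ a) (n : ℤ) :
    Summable (fun i : ℕ => (h (n + i) : ℝ) * α ^ i) := by
  apply Summable.of_norm_bounded (g := fun i : ℕ => (a : ℝ) * |α| ^ i)
  · exact (summable_geometric_of_lt_one (abs_nonneg _)
      (abs_alpha_lt_one hroot hpos ha hα)).mul_left _
  · intro i
    rw [norm_mul, norm_pow]
    simp only [Real.norm_eq_abs]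
    apply mul_le_mul_of_nonneg_right _ (by positivity)
    have h1 := (hd (n + i)).1
    have h2 := (hd (n + i)).2
    have : |h (n + i)| ≤ (a : ℤ) := by rw [abs_of_nonneg h1]; exact h2
    exact_mod_cast this

lemma tailS_le (hroot : β ^ 2 = a * β + 1) (hpos : 0 < β) (ha : 0 < a)
    (hα : α = -β⁻¹) (h : ℤ → ℤ) (hd : ∀ i, 0 ≤ h i ∧ h i ≤ a) (n : ℤ) :
    tailS α h n ≤ β := by
  have hβ1 := beta_gt_one ha hroot hpos
  have htlt : β⁻¹ < 1 := by rw [inv_lt_one_iff₀]; right; exact hβ1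
  have htpos : (0:ℝ) < β⁻¹ := by positivity
  have hαlt : |α| < 1 := abs_alpha_lt_one hroot hpos ha hα
  have hαn : ‖α‖ < 1 := by rw [Real.norm_eq_abs]; exact hαlt
  have hsumα : Summable (fun i : ℕ => α ^ i) := summable_geometric_of_norm_lt_one hαn
  have hsumt : Summable (fun i : ℕ => (β⁻¹) ^ i) :=
    summable_geometric_of_lt_one htpos.le htlt
  have hmaj : Summable (fun i : ℕ => ((a:ℝ)/2) * (α ^ i + (β⁻¹) ^ i)) :=
    (hsumα.add hsumt).mul_left _
  have hstep : ∀ i : ℕ, (h (n + i) : ℝ) * α ^ i ≤ ((a:ℝ)/2) * (α ^ i + (β⁻¹) ^ i) := by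
    intro i
    have h1 : (0:ℝ) ≤ (h (n+i) : ℝ) := by exact_mod_cast (hd (n+i)).1
    have h2 : (h (n+i) : ℝ) ≤ a := by exact_mod_cast (hd (n+i)).2
    rcases Nat.even_or_odd i with he | ho
    · have hαi : α ^ i = (β⁻¹) ^ i := by rw [hα, he.neg_pow]
      rw [hαi]
      have : (0:ℝ) ≤ (β⁻¹)^i := by positivity
      nlinarith
    · have hαi : α ^ i = -((β⁻¹) ^ i) := by rw [hα, ho.neg_pow]
      rw [hαi]
      have : (0:ℝ) ≤ (β⁻¹)^i := by positivity
      nlinarith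
  calc tailS α h n ≤ ∑' i : ℕ, ((a:ℝ)/2) * (α ^ i + (β⁻¹) ^ i) :=
        Summable.tsum_le_tsum hstep (summable_tail hroot hpos ha hα h hd n) hmaj
    _ = ((a:ℝ)/2) * ((1 - α)⁻¹ + (1 - β⁻¹)⁻¹) := by
        rw [tsum_mul_left, Summable.tsum_add hsumα hsumt, tsum_geometric_of_norm_lt_one hαn,
          tsum_geometric_of_lt_one htpos.le htlt]
    _ = β := by
        rw [hα]
        have h1 : (1:ℝ) + β⁻¹ ≠ 0 := by positivity
        have h2 : β - 1 ≠ 0 := by intro hc; nlinarith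
        have hb : β ≠ 0 := ne_of_gt hpos
        rw [sub_neg_eq_add]
        field_simp
        ring_nf
        nlinarith [sq_nonneg β]

lemma neg_one_le_tailS (hroot : β ^ 2 = a * β + 1) (hpos : 0 < β) (ha : 0 < a)
    (hα : α = -β⁻¹) (h : ℤ → ℤ) (hd : ∀ i, 0 ≤ h i ∧ h i ≤ a) (n : ℤ) :
    -1 ≤ tailS α h n := by
  have hβ1 := beta_gt_one ha hroot hpos
  have htlt : β⁻¹ < 1 := by rw [inv_lt_one_iff₀]; right; exact hβ1
  have htpos : (0:ℝ) < β⁻¹ := by positivity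
  have hαlt : |α| < 1 := abs_alpha_lt_one hroot hpos ha hα
  have hαn : ‖α‖ < 1 := by rw [Real.norm_eq_abs]; exact hαlt
  have hsumα : Summable (fun i : ℕ => α ^ i) := summable_geometric_of_norm_lt_one hαn
  have hsumt : Summable (fun i : ℕ => (β⁻¹) ^ i) :=
    summable_geometric_of_lt_one htpos.le htlt
  have hmin : Summable (fun i : ℕ => ((a:ℝ)/2) * (α ^ i - (β⁻¹) ^ i)) :=
    (hsumα.sub hsumt).mul_left _
  have hstep : ∀ i : ℕ, ((a:ℝ)/2) * (α ^ i - (β⁻¹) ^ i) ≤ (h (n + i) : ℝ) * α ^ i := by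
    intro i
    have h1 : (0:ℝ) ≤ (h (n+i) : ℝ) := by exact_mod_cast (hd (n+i)).1
    have h2 : (h (n+i) : ℝ) ≤ a := by exact_mod_cast (hd (n+i)).2
    rcases Nat.even_or_odd i with he | ho
    · have hαi : α ^ i = (β⁻¹) ^ i := by rw [hα, he.neg_pow]
      rw [hαi]
      have : (0:ℝ) ≤ (β⁻¹)^i := by positivity
      nlinarith
    · have hαi : α ^ i = -((β⁻¹) ^ i) := by rw [hα, ho.neg_pow]
      rw [hαi]
      have : (0:ℝ) ≤ (β⁻¹)^i := by positivity
      nlinarith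
  have key : ∑' i : ℕ, ((a:ℝ)/2) * (α ^ i - (β⁻¹) ^ i) = -1 := by
    rw [tsum_mul_left, Summable.tsum_sub hsumα hsumt, tsum_geometric_of_norm_lt_one hαn,
      tsum_geometric_of_lt_one htpos.le htlt, hα]
    have h1 : (1:ℝ) + β⁻¹ ≠ 0 := by positivity
    have h2 : β - 1 ≠ 0 := by intro hc; nlinarith
    have hb : β ≠ 0 := ne_of_gt hpos
    rw [sub_neg_eq_add]
    field_simp
    ring_nf
    nlinarith [sq_nonneg β]
  calc (-1:ℝ) = ∑' i : ℕ, ((a:ℝ)/2) * (α ^ i - (β⁻¹) ^ i) := key.symm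
    _ ≤ tailS α h n := Summable.tsum_le_tsum hstep hmin (summable_tail hroot hpos ha hα h hd n)

lemma tailS_rec (hroot : β ^ 2 = a * β + 1) (hpos : 0 < β) (ha : 0 < a)
    (hα : α = -β⁻¹) (h : ℤ → ℤ) (hd : ∀ i, 0 ≤ h i ∧ h i ≤ a) (n : ℤ) :
    tailS α h n = h n + α * tailS α h (n + 1) := by
  unfold tailS
  rw [Summable.tsum_eq_zero_add (summable_tail hroot hpos ha hα h hd n)]
  have e0 : (h (n + (0:ℕ)) : ℝ) * α ^ (0:ℕ) = h n := by norm_num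
  rw [e0]
  congr 1
  have e1 : ∀ i : ℕ, (h (n + (i + 1 : ℕ)) : ℝ) * α ^ (i + 1) =
      α * ((h ((n + 1) + i) : ℝ) * α ^ i) := by
    intro i
    have harg : n + ((i : ℤ) + 1) = (n + 1) + i := by ring
    rw [show ((i + 1 : ℕ) : ℤ) = (i : ℤ) + 1 by push_cast; ring, harg]
    ring
  simp_rw [e1]
  rw [tsum_mul_left]

lemma alpha_tail_bounds (hroot : β ^ 2 = a * β + 1) (hpos : 0 < β) (ha : 0 < a)
    (hα : α = -β⁻¹) (h : ℤ → ℤ) (hd : ∀ i, 0 ≤ h i ∧ h i ≤ a) (n : ℤ) :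
    -1 ≤ α * tailS α h n ∧ α * tailS α h n ≤ β⁻¹ := by
  have hup := tailS_le hroot hpos ha hα h hd n
  have hlo := neg_one_le_tailS hroot hpos ha hα h hd n
  have htpos : (0:ℝ) < β⁻¹ := by positivity
  rw [hα] at *
  constructor
  · have hβinv : β⁻¹ * β = 1 := inv_mul_cancel₀ (ne_of_gt hpos)
    nlinarith
  · nlinarith

lemma tail_step_bot (hroot : β ^ 2 = a * β + 1) (hpos : 0 < β) (ha : 0 < a)
    (hα : α = -β⁻¹) (h : ℤ → ℤ) (hd : ∀ i, 0 ≤ h i ∧ h i ≤ a) (n : ℤ)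
    (hS : tailS α h n = -1) : h n = 0 ∧ tailS α h (n + 1) = β := by
  have hrec := tailS_rec hroot hpos ha hα h hd n
  have hb := alpha_tail_bounds hroot hpos ha hα h hd (n + 1)
  have htpos : (0:ℝ) < β⁻¹ := by positivity
  have h1 : (0:ℝ) ≤ (h n : ℝ) := by exact_mod_cast (hd n).1
  have hn0 : (h n : ℝ) = 0 := by
    have : (h n : ℝ) = -1 - α * tailS α h (n + 1) := by rw [hS] at hrec; linarith
    nlinarith [hb.1]
  have hne : h n = 0 := by exact_mod_cast hn0
  refine ⟨hne, ?_⟩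
  have hαS : α * tailS α h (n + 1) = -1 := by
    rw [hS, hn0] at hrec; linarith
  have hαβ : α * β = -1 := alpha_mul_beta hpos hα
  have hαne : α ≠ 0 := alpha_ne_zero hpos hα
  have : α * tailS α h (n + 1) = α * β := by rw [hαS, hαβ]
  exact mul_left_cancel₀ hαne this

lemma tail_step_top (hroot : β ^ 2 = a * β + 1) (hpos : 0 < β) (ha : 0 < a)
    (hα : α = -β⁻¹) (h : ℤ → ℤ) (hd : ∀ i, 0 ≤ h i ∧ h i ≤ a) (n : ℤ)
    (hS : tailS α h n = β) : h n = a ∧ tailS α h (n + 1) = -1 := by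
  have hrec := tailS_rec hroot hpos ha hα h hd n
  have hb := alpha_tail_bounds hroot hpos ha hα h hd (n + 1)
  have hba := beta_sub_inv hroot hpos
  have h2 : (h n : ℝ) ≤ a := by exact_mod_cast (hd n).2
  have hna : (h n : ℝ) = a := by
    have : (h n : ℝ) = β - α * tailS α h (n + 1) := by rw [hS] at hrec; linarith
    nlinarith [hb.2]
  have hne : h n = a := by exact_mod_cast hna
  refine ⟨hne, ?_⟩
  have hαS : α * tailS α h (n + 1) = β⁻¹ := by
    rw [hS, hna] at hrec; linarith
  have hαne : α ≠ 0 := alpha_ne_zero hpos hα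
  have hkey : α * (-1 : ℝ) = β⁻¹ := by rw [hα]; ring
  have : α * tailS α h (n + 1) = α * (-1 : ℝ) := by rw [hαS, hkey]
  exact mul_left_cancel₀ hαne this

lemma tail_min_pattern (hroot : β ^ 2 = a * β + 1) (hpos : 0 < β) (ha : 0 < a)
    (hα : α = -β⁻¹) (h : ℤ → ℤ) (hd : ∀ i, 0 ≤ h i ∧ h i ≤ a) (n : ℤ)
    (hS : tailS α h n = -1) :
    ∀ m : ℕ, h (n + 2 * (m : ℤ)) = 0 ∧ h (n + 2 * (m : ℤ) + 1) = a := by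
  have key : ∀ m : ℕ, tailS α h (n + 2 * (m : ℤ)) = -1 := by
    intro m
    induction m with
    | zero => simpa using hS
    | succ m ih =>
      have h1 := (tail_step_bot hroot hpos ha hα h hd _ ih).2
      have h2 := (tail_step_top hroot hpos ha hα h hd _ h1).2
      have harg : n + 2 * (m : ℤ) + 1 + 1 = n + 2 * ((m + 1 : ℕ) : ℤ) := by
        push_cast; ring
      rw [harg] at h2
      exact h2
  intro m
  have h1 := tail_step_bot hroot hpos ha hα h hd _ (key m)
  have h2 := tail_step_top hroot hpos ha hα h hd _ h1.2
  exact ⟨h1.1, h2.1⟩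

lemma periodic_of_pattern {g : ℤ → ℤ} {N : ℤ}
    (hpat : ∀ m : ℕ, g (N + 2 * (m : ℤ)) = 0 ∧ g (N + 2 * (m : ℤ) + 1) = a) :
    EventuallyPeriodic g := by
  refine ⟨N, 2, two_pos, ?_⟩
  intro i hi
  have hs : ((i - N).toNat : ℤ) = i - N := Int.toNat_of_nonneg (by linarith)
  rcases Nat.even_or_odd (i - N).toNat with ⟨m, hm⟩ | ⟨m, hm⟩
  · have hi' : i = N + 2 * (m : ℤ) := by
      rw [hm] at hs; push_cast at hs; omega
    have hi2 : i + ((2:ℕ):ℤ) = N + 2 * ((m + 1 : ℕ) : ℤ) := by push_cast; omega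
    rw [hi2, (hpat (m + 1)).1, hi', (hpat m).1]
  · have hi' : i = N + 2 * (m : ℤ) + 1 := by
      rw [hm] at hs; push_cast at hs; omega
    have hi2 : i + ((2:ℕ):ℤ) = N + 2 * ((m + 1 : ℕ) : ℤ) + 1 := by push_cast; omega
    rw [hi2, (hpat (m + 1)).2, hi', (hpat m).2]

end AuxSection

/-- Let β be the positive root of x² - ax - 1 (a ∈ ℤ_{>0}) and
α = -β⁻¹.  If a number z has an eventually periodic weakly admissible α-adic
expansion, then every weakly admissible α-adic expansion of z is eventually
periodic. -/
theorem all_expansions_eventually_periodic (a : ℕ) (ha : 0 < a) (β α : ℝ)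
    (hβroot : β ^ 2 = a * β + 1) (hβpos : 0 < β) (hα : α = -β⁻¹) (z : ℝ)
    (hex : ∃ f : ℤ → ℤ, IsAlphaAdicExpansion a α f z ∧ EventuallyPeriodic f) :
    ∀ g : ℤ → ℤ, IsAlphaAdicExpansion a α g z → EventuallyPeriodic g := by
  obtain ⟨f, ⟨hfd, ⟨kf, hkf⟩, hfadm, hfsum⟩, hfper⟩ := hex
  intro g hg
  obtain ⟨hgd, ⟨kg, hkg⟩, hgadm, hgsum⟩ := hg
  by_cases hfg : ∀ i, f i = g i
  · obtain ⟨N, p, hp, hper⟩ := hfper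
    exact ⟨N, p, hp, fun i hi => by rw [← hfg, ← hfg]; exact hper i hi⟩
  push_neg at hfg
  -- least index where f and g differ
  obtain ⟨j, hj, hjmin⟩ := Int.exists_least_of_bdd
    (P := fun i => f i ≠ g i)
    ⟨min kf kg, fun i hi => by
      by_contra hlt
      push_neg at hlt
      have h1 : f i = 0 := hkf i (lt_of_lt_of_le hlt (min_le_left _ _))
      have h2 : g i = 0 := hkg i (lt_of_lt_of_le hlt (min_le_right _ _))
      exact hi (h1.trans h2.symm)⟩ hfg
  have hjeq : ∀ i, i < j → f i = g i := by
    intro i hi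
    by_contra hne
    exact absurd (hjmin i hne) (not_le.2 hi)
  have hαne : α ≠ 0 := alpha_ne_zero hβpos hα
  have hβ1 : 1 < β := beta_gt_one ha hβroot hβpos
  have htpos : (0:ℝ) < β⁻¹ := by positivity
  have htlt : β⁻¹ < 1 := by rw [inv_lt_one_iff₀]; right; exact hβ1
  -- the difference series sums to 0 and is supported on [j, ∞)
  have hd0 : HasSum (fun i : ℤ => ((f i : ℝ) - g i) * α ^ i) 0 := by
    have := hfsum.sub hgsum
    simpa [sub_mul] using this
  have hinj : Function.Injective (fun i : ℕ => j + (i : ℤ)) := by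
    intro u v huv
    simp only at huv
    omega
  have hvan : ∀ x ∉ Set.range (fun i : ℕ => j + (i : ℤ)),
      ((f x : ℝ) - g x) * α ^ x = 0 := by
    intro x hx
    have hxj : x < j := by
      by_contra hge
      push_neg at hge
      exact hx ⟨(x - j).toNat, by simp [Int.toNat_of_nonneg (by omega : (0:ℤ) ≤ x - j)]⟩
    rw [hjeq x hxj]
    simp
  have hcomp : HasSum (fun i : ℕ => ((f (j + i) : ℝ) - g (j + i)) * α ^ ((j : ℤ) + i)) 0 :=
    (Function.Injective.hasSum_iff hinj hvan).2 hd0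
  have hfe : (fun i : ℕ => ((f (j + i) : ℝ) - g (j + i)) * α ^ ((j : ℤ) + i)) =
      (fun i : ℕ => α ^ (j : ℤ) * (((f (j + i) : ℝ) - g (j + i)) * α ^ i)) := by
    funext i
    rw [zpow_add₀ hαne, zpow_natCast]
    ring
  rw [hfe] at hcomp
  have hU : HasSum (fun i : ℕ => ((f (j + i) : ℝ) - g (j + i)) * α ^ i) 0 := by
    have h2 := hcomp.mul_left (α ^ (j : ℤ))⁻¹
    rw [mul_zero] at h2
    simpa [inv_mul_cancel_left₀ (zpow_ne_zero j hαne)] using h2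
  have hsumf := summable_tail hβroot hβpos ha hα f hfd
  have hsumg := summable_tail hβroot hβpos ha hα g hgd
  have heq : tailS α f j = tailS α g j := by
    have h1 := hU.tsum_eq
    simp only [sub_mul] at h1
    rw [Summable.tsum_sub (hsumf j) (hsumg j)] at h1
    unfold tailS
    linarith
  have hrf := tailS_rec hβroot hβpos ha hα f hfd j
  have hrg := tailS_rec hβroot hβpos ha hα g hgd j
  set Sf' := tailS α f (j + 1) with hSf'def
  set Sg' := tailS α g (j + 1) with hSg'def
  have hE : ((f j : ℝ) - g j) = α * Sg' - α * Sf' := by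
    rw [heq] at hrf
    linarith
  have hSf'up := tailS_le hβroot hβpos ha hα f hfd (j + 1)
  have hSf'lo := neg_one_le_tailS hβroot hβpos ha hα f hfd (j + 1)
  have hSg'up := tailS_le hβroot hβpos ha hα g hgd (j + 1)
  have hSg'lo := neg_one_le_tailS hβroot hβpos ha hα g hgd (j + 1)
  have hβinv : β⁻¹ * β = 1 := inv_mul_cancel₀ (ne_of_gt hβpos)
  have habs : |(f j : ℝ) - g j| ≤ β⁻¹ * (β + 1) := by
    rw [hE, ← mul_sub, abs_mul, abs_alpha hβpos hα]
    apply mul_le_mul_of_nonneg_left _ (le_of_lt htpos)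
    rw [abs_le]
    constructor <;> [skip; skip] <;> linarith
  have hlt2 : |(f j : ℝ) - g j| < 2 := by
    apply lt_of_le_of_lt habs
    nlinarith
  have hΔ : f j - g j = 1 ∨ f j - g j = -1 := by
    have hc : |((f j - g j : ℤ) : ℝ)| < 2 := by push_cast; exact hlt2
    rw [← Int.cast_abs] at hc
    have hcz : |f j - g j| < 2 := by exact_mod_cast hc
    have hcz2 := abs_lt.mp hcz
    omega
  have hαβ : α * β = -1 := alpha_mul_beta hβpos hα
  have hba : β - β⁻¹ = (a : ℝ) := beta_sub_inv hβroot hβpos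
  rcases hΔ with hc1 | hc1
  · -- f j = g j + 1 : tail of g from j+1 is forced to be 0,a,0,a,...
    have hER : (1 : ℝ) = α * Sg' - α * Sf' := by
      have : ((f j - g j : ℤ) : ℝ) = α * Sg' - α * Sf' := by push_cast; exact hE
      rw [hc1] at this
      exact_mod_cast this
    have hdiff : Sg' - Sf' = -β := by
      apply mul_left_cancel₀ hαne
      rw [mul_sub, mul_neg, hαβ]
      linarith
    have hSf'ge : β - 1 ≤ Sf' := by linarith
    have hrf2 := tailS_rec hβroot hβpos ha hα f hfd (j + 1)
    have hb2 := alpha_tail_bounds hβroot hβpos ha hα f hfd (j + 2)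
    rw [show j + 1 + 1 = j + 2 by ring] at hrf2
    have hge : ((a : ℝ) - 1) ≤ (f (j + 1) : ℝ) := by
      rw [← hSf'def] at hrf2
      linarith [hb2.2]
    have hnea : f (j + 1) ≠ (a : ℤ) := by
      intro hcon
      have hf0 := hfadm j hcon
      have hg0 := (hgd j).1
      omega
    have hle := (hfd (j + 1)).2
    have hgeZ : (a : ℤ) - 1 ≤ f (j + 1) := by
      have : (((a : ℤ) - 1 : ℤ) : ℝ) ≤ (f (j + 1) : ℝ) := by push_cast; linarith
      exact_mod_cast this
    have hfj1 : f (j + 1) = (a : ℤ) - 1 := by omega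
    have hf1R : (f (j + 1) : ℝ) = (a : ℝ) - 1 := by rw [hfj1]; push_cast; ring
    rw [← hSf'def, hf1R] at hrf2
    have hSg'eq : Sg' = -1 := by linarith [hb2.2]
    exact periodic_of_pattern (tail_min_pattern hβroot hβpos ha hα g hgd (j + 1) hSg'eq)
  · -- g j = f j + 1 : tail of g from j+2 is forced to be 0,a,0,a,...
    have hER : (-1 : ℝ) = α * Sg' - α * Sf' := by
      have : ((f j - g j : ℤ) : ℝ) = α * Sg' - α * Sf' := by push_cast; exact hE
      rw [hc1] at this
      exact_mod_cast this
    have hdiff : Sg' - Sf' = β := by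
      apply mul_left_cancel₀ hαne
      rw [mul_sub, hαβ]
      linarith
    have hSg'ge : β - 1 ≤ Sg' := by linarith
    have hrg2 := tailS_rec hβroot hβpos ha hα g hgd (j + 1)
    have hb2 := alpha_tail_bounds hβroot hβpos ha hα g hgd (j + 2)
    rw [show j + 1 + 1 = j + 2 by ring] at hrg2
    have hge : ((a : ℝ) - 1) ≤ (g (j + 1) : ℝ) := by
      rw [← hSg'def] at hrg2
      linarith [hb2.2]
    have hnea : g (j + 1) ≠ (a : ℤ) := by
      intro hcon
      have hg0 := hgadm j hcon
      have hf0 := (hfd j).1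
      omega
    have hle := (hgd (j + 1)).2
    have hgeZ : (a : ℤ) - 1 ≤ g (j + 1) := by
      have : (((a : ℤ) - 1 : ℤ) : ℝ) ≤ (g (j + 1) : ℝ) := by push_cast; linarith
      exact_mod_cast this
    have hgj1 : g (j + 1) = (a : ℤ) - 1 := by omega
    have hg1R : (g (j + 1) : ℝ) = (a : ℝ) - 1 := by rw [hgj1]; push_cast; ring
    rw [← hSg'def, hg1R] at hrg2
    have hαSg'' : α * tailS α g (j + 2) = β⁻¹ := by linarith [hb2.2]
    have hSg''eq : tailS α g (j + 2) = -1 := by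
      apply mul_left_cancel₀ hαne
      rw [hαSg'', hα]
      ring
    exact periodic_of_pattern (tail_min_pattern hβroot hβpos ha hα g hgd (j + 2) hSg''eq)
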